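/- Let A be an MIP* set. Then there exist x₁, x₂ ∈ A with x₁, x₂ ≥ 2 such that x₁^{x₂} ∈ A and x₂^{x₁} ∈ A. -/

import Mathlib

open Finset

/-- Finite sums of a sequence over nonempty finite index sets. -/
def FS (x : ℕ → ℕ) : Set ℕ :=
  {s | ∃ H : Finset ℕ, H.Nonempty ∧ s = ∑ t ∈ H, x t}

/-- Finite products of a sequence over nonempty finite index sets. -/
def FP (x : ℕ → ℕ) : Set ℕ :=
  {s | ∃ H : Finset ℕ, H.Nonempty ∧ s = ∏ t ∈ H, x t}

/-- Block-ordered: every element of `H n` is below every element of `H (n+1)`. -/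
def Blocked (H : ℕ → Finset ℕ) : Prop :=
  ∀ n, ∀ a ∈ H n, ∀ b ∈ H (n + 1), a < b

/-- `y` is a sum subsystem of `x`. -/
def SumSubsystem (x y : ℕ → ℕ) : Prop :=
  ∃ H : ℕ → Finset ℕ, (∀ n, (H n).Nonempty) ∧ Blocked H ∧
    ∀ n, y n = ∑ t ∈ H n, x t

/-- `y` is a product subsystem of `x`. -/
def ProdSubsystem (x y : ℕ → ℕ) : Prop :=
  ∃ H : ℕ → Finset ℕ, (∀ n, (H n).Nonempty) ∧ Blocked H ∧
    ∀ n, y n = ∏ t ∈ H n, x t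

/-- Additive IP set. -/
def AIP (A : Set ℕ) : Prop :=
  ∃ x : ℕ → ℕ, (∀ n, 0 < x n) ∧ FS x ⊆ A

/-- Additive IP* set. -/
def AIPStar (A : Set ℕ) : Prop :=
  ∀ B : Set ℕ, AIP B → (A ∩ B).Nonempty

/-- Multiplicative IP set. -/
def MIP (A : Set ℕ) : Prop :=
  ∃ x : ℕ → ℕ, (∀ n, 0 < x n) ∧ FP x ⊆ A

/-- Multiplicative IP* set. -/
def MIPStar (A : Set ℕ) : Prop :=
  ∀ B : Set ℕ, MIP B → (A ∩ B).Nonempty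

section Aux

open Filter

attribute [local instance] Ultrafilter.mul Ultrafilter.add
attribute [local instance] Ultrafilter.semigroup Ultrafilter.addSemigroup

/-- Elements of Mathlib's `Hindman.FP` are finite products in our sense. -/
lemma hindmanFP_subset (a : Stream' ℕ) : Hindman.FP a ⊆ FP a.get := by
  intro m hm
  induction hm with
  | head' a =>
      exact ⟨{0}, Finset.singleton_nonempty 0, by simp [Stream'.head]⟩
  | tail' a m h ih =>
      obtain ⟨H, hH, rfl⟩ := ih
      refine ⟨H.image (· + 1), hH.image _, ?_⟩
      rw [Finset.prod_image (by intro x _ y _ h; simp only at h; omega)]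
      simp
  | cons' a m h ih =>
      obtain ⟨H, hH, rfl⟩ := ih
      refine ⟨insert 0 (H.image (· + 1)), Finset.insert_nonempty _ _, ?_⟩
      rw [Finset.prod_insert (by simp), Finset.prod_image (by intro x _ y _ h; simp only at h; omega)]
      simp [Stream'.head]

/-- Elements of Mathlib's `Hindman.FS` are finite sums in our sense. -/
lemma hindmanFS_subset (a : Stream' ℕ) : Hindman.FS a ⊆ FS a.get := by
  intro m hm
  induction hm with
  | head' a =>
      exact ⟨{0}, Finset.singleton_nonempty 0, by simp [Stream'.head]⟩
  | tail' a m h ih =>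
      obtain ⟨H, hH, rfl⟩ := ih
      refine ⟨H.image (· + 1), hH.image _, ?_⟩
      rw [Finset.sum_image (by intro x _ y _ h; simp only at h; omega)]
      simp
  | cons' a m h ih =>
      obtain ⟨H, hH, rfl⟩ := ih
      refine ⟨insert 0 (H.image (· + 1)), Finset.insert_nonempty _ _, ?_⟩
      rw [Finset.sum_insert (by simp), Finset.sum_image (by intro x _ y _ h; simp only at h; omega)]
      simp [Stream'.head]

lemma ourFP_subset (a : Stream' ℕ) : FP a.get ⊆ Hindman.FP a := by
  rintro m ⟨H, hH, rfl⟩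
  exact Hindman.FP.finset_prod a H hH

lemma ourFS_subset (a : Stream' ℕ) : FS a.get ⊆ Hindman.FS a := by
  rintro m ⟨H, hH, rfl⟩
  exact Hindman.FS.finset_sum a H hH

/-- Members of a multiplicative idempotent ultrafilter concentrated on positives are MIP. -/
lemma mip_of_idem {W : Ultrafilter ℕ} (hW : W * W = W) (h0 : {m : ℕ | 0 < m} ∈ W)
    {s : Set ℕ} (hs : s ∈ W) : MIP s := by
  obtain ⟨b, hb⟩ := Hindman.exists_FP_of_large W hW (s ∩ {m | 0 < m}) (inter_mem hs h0)
  refine ⟨b.get, fun n => (hb (Hindman.FP.singleton b n)).2, fun m hm => (hb (ourFP_subset b hm)).1⟩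

/-- Members of an additive idempotent ultrafilter concentrated on positives are AIP. -/
lemma aip_of_idem {U : Ultrafilter ℕ} (hU : U + U = U) (h0 : {m : ℕ | 0 < m} ∈ U)
    {s : Set ℕ} (hs : s ∈ U) : AIP s := by
  obtain ⟨b, hb⟩ := Hindman.exists_FS_of_large U hU (s ∩ {m | 0 < m}) (inter_mem hs h0)
  refine ⟨b.get, fun n => (hb (Hindman.FS.singleton b n)).2, fun m hm => (hb (ourFS_subset b hm)).1⟩

/-- If every member of `U` is AIP, then `U` lives on the positives. -/
lemma pos_mem_of_good {U : Ultrafilter ℕ} (hU : ∀ s ∈ U, AIP s) : {m : ℕ | 0 < m} ∈ U := by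
  by_contra h
  obtain ⟨x, hx, hFS⟩ := hU _ (Ultrafilter.compl_mem_iff_notMem.mpr h)
  have hx0 : x 0 ∈ FS x := ⟨{0}, Finset.singleton_nonempty 0, by simp⟩
  exact (hFS hx0) (hx 0)

/-- If every member of `U` is AIP, then `U` lives on `{m | 2 ≤ m}`. -/
lemma two_le_mem_of_good {U : Ultrafilter ℕ} (hU : ∀ s ∈ U, AIP s) : {m : ℕ | 2 ≤ m} ∈ U := by
  by_contra h
  obtain ⟨x, hx, hFS⟩ := hU _ (Ultrafilter.compl_mem_iff_notMem.mpr h)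
  have hx01 : x 0 + x 1 ∈ FS x := by
    refine ⟨{0, 1}, by simp, ?_⟩
    rw [Finset.sum_pair (by omega)]
  have h0 := hx 0
  have h1 := hx 1
  have := hFS hx01
  simp only [Set.mem_compl_iff, Set.mem_setOf_eq, not_le] at this
  omega

/-- There is a multiplicative idempotent ultrafilter all of whose members are AIP. -/
lemma exists_mult_idem_good :
    ∃ W : Ultrafilter ℕ, (∀ s ∈ W, AIP s) ∧ W * W = W := by
  set Γ : Set (Ultrafilter ℕ) := {U | ∀ s ∈ U, AIP s} with hΓ
  have hclosed : IsClosed Γ := by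
    have : Γ = ⋂ (s : {s : Set ℕ // ¬ AIP s}), {U : Ultrafilter ℕ | (s : Set ℕ) ∈ U}ᶜ := by
      ext U
      simp only [hΓ, Set.mem_iInter, Set.mem_setOf_eq, Set.mem_compl_iff, Subtype.forall]
      constructor
      · intro h s hs hsU
        exact hs (h s hsU)
      · intro h s hsU
        by_contra hna
        exact h s hna hsU
    rw [this]
    exact isClosed_iInter fun s => (ultrafilter_isOpen_basic _).isClosed_compl
  have hne : Γ.Nonempty := by
    obtain ⟨U, hidem, hmem⟩ :=
      Hindman.exists_idempotent_ultrafilter_le_FS ((fun _ => 1 : Stream' ℕ))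
    have h0 : {m : ℕ | 0 < m} ∈ U := by
      refine mem_of_superset hmem ?_
      intro m hm
      obtain ⟨H, hH, rfl⟩ := hindmanFS_subset _ hm
      have : 0 < H.card := Finset.card_pos.mpr hH
      simp only [Set.mem_setOf_eq]
      have heq : ∑ t ∈ H, Stream'.get (fun _ => 1 : Stream' ℕ) t = H.card := by
        simp [Stream'.get]
      rw [heq]
      exact this
    exact ⟨U, fun s hs => aip_of_idem hidem h0 hs⟩
  have hsub : ∀ U ∈ Γ, ∀ V ∈ Γ, U * V ∈ Γ := by
    intro U hU V hV s hs
    have hmul : ∀ᶠ m in (U : Filter ℕ), ∀ᶠ n in (V : Filter ℕ), m * n ∈ s :=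
      (Ultrafilter.eventually_mul U V (· ∈ s)).mp
        (Filter.eventually_iff.mpr (by simpa using hs))
    have hposU : ∀ᶠ m in (U : Filter ℕ), 0 < m :=
      Filter.eventually_iff.mpr (by simpa using pos_mem_of_good hU)
    obtain ⟨m, hm0, hmB⟩ := (hposU.and hmul).exists
    have hBV : {n : ℕ | m * n ∈ s} ∈ V := hmB
    obtain ⟨y, hy, hFSy⟩ := hV _ hBV
    refine ⟨fun n => m * y n, fun n => Nat.mul_pos hm0 (hy n), ?_⟩
    rintro k ⟨H, hH, rfl⟩
    have hmem : (∑ t ∈ H, y t) ∈ FS y := ⟨H, hH, rfl⟩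
    have h2 := hFSy hmem
    simpa [Finset.mul_sum] using h2
  obtain ⟨W, hWΓ, hidem⟩ :=
    exists_idempotent_in_compact_subsemigroup Ultrafilter.continuous_mul_left Γ hne
      hclosed.isCompact hsub
  exact ⟨W, hWΓ, hidem⟩

/-- An MIP* set belongs to every multiplicative idempotent ultrafilter on the positives. -/
lemma mipstar_mem {W : Ultrafilter ℕ} (hW : W * W = W) (h0 : {m : ℕ | 0 < m} ∈ W)
    {A : Set ℕ} (hA : MIPStar A) : A ∈ W := by
  by_contra h
  have hc : MIP Aᶜ := mip_of_idem hW h0 (Ultrafilter.compl_mem_iff_notMem.mpr h)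
  obtain ⟨z, hz1, hz2⟩ := hA Aᶜ hc
  exact hz2 hz1

/-- An AIP* set belongs to every ultrafilter whose members are all AIP. -/
lemma aipstar_mem {W : Ultrafilter ℕ} (hW : ∀ s ∈ W, AIP s)
    {D : Set ℕ} (hD : AIPStar D) : D ∈ W := by
  by_contra h
  have hc : AIP Dᶜ := hW _ (Ultrafilter.compl_mem_iff_notMem.mpr h)
  obtain ⟨z, hz1, hz2⟩ := hD Dᶜ hc
  exact hz2 hz1

/-- For `a ≥ 1` and `A` MIP*, the set `{b | a^b ∈ A}` is AIP*. -/
lemma aipstar_log {A : Set ℕ} (hA : MIPStar A) {a : ℕ} (ha : 0 < a) :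
    AIPStar {b : ℕ | a ^ b ∈ A} := by
  rintro B ⟨y, hy, hFS⟩
  have hMIP : MIP ((fun s => a ^ s) '' FS y) := by
    refine ⟨fun n => a ^ y n, fun n => pow_pos ha _, ?_⟩
    rintro m ⟨H, hH, rfl⟩
    refine ⟨∑ t ∈ H, y t, ⟨H, hH, rfl⟩, ?_⟩
    rw [Finset.prod_pow_eq_pow_sum]
  obtain ⟨c, hcA, hcC⟩ := hA _ hMIP
  obtain ⟨s, hsFS, rfl⟩ := hcC
  exact ⟨s, by simpa using hcA, hFS hsFS⟩

/-- `{b | b^a ∈ A}` is large for any multiplicative idempotent on the positives. -/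
lemma pow_mem_ultra {W : Ultrafilter ℕ} (hW : W * W = W) (h0 : {m : ℕ | 0 < m} ∈ W)
    {A : Set ℕ} (hA : MIPStar A) (a : ℕ) : {b : ℕ | b ^ a ∈ A} ∈ W := by
  set W' := W.map (· ^ a) with hW'def
  have hidem : W' * W' = W' := by
    apply Ultrafilter.coe_inj.mp
    apply Filter.ext'
    intro p
    rw [Ultrafilter.eventually_mul]
    simp only [hW'def, Ultrafilter.coe_map, Filter.eventually_map]
    have hmp : ∀ m n : ℕ, m ^ a * n ^ a = (m * n) ^ a := fun m n => (mul_pow m n a).symm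
    simp only [hmp]
    rw [← Ultrafilter.eventually_mul W W (fun k => p (k ^ a)), hW]
  have h0' : {m : ℕ | 0 < m} ∈ W' := by
    rw [hW'def, Ultrafilter.mem_map]
    refine mem_of_superset h0 ?_
    intro b hb
    exact pow_pos (show 0 < b from hb) a
  have hmem : A ∈ W' := mipstar_mem hidem h0' hA
  rw [hW'def, Ultrafilter.mem_map] at hmem
  exact hmem

end Aux

theorem mipstar_two_exponentials (A : Set ℕ) (hA : MIPStar A) :
    ∃ x₁ x₂ : ℕ, x₁ ∈ A ∧ x₂ ∈ A ∧ 2 ≤ x₁ ∧ 2 ≤ x₂ ∧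
      x₁ ^ x₂ ∈ A ∧ x₂ ^ x₁ ∈ A := by
  letI := Ultrafilter.mul (M := ℕ)
  letI := Ultrafilter.semigroup (M := ℕ)
  obtain ⟨W, hWΓ, hW⟩ := exists_mult_idem_good
  have h0 : {m : ℕ | 0 < m} ∈ W := pos_mem_of_good hWΓ
  have h2 : {m : ℕ | 2 ≤ m} ∈ W := two_le_mem_of_good hWΓ
  have hAW : A ∈ W := mipstar_mem hW h0 hA
  obtain ⟨x₁, hx₁A, hx₁2⟩ := Ultrafilter.nonempty_of_mem (Filter.inter_mem hAW h2)
  have hlog : {b : ℕ | x₁ ^ b ∈ A} ∈ W :=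
    aipstar_mem hWΓ (aipstar_log hA (show (0:ℕ) < x₁ by exact lt_of_lt_of_le (by norm_num) hx₁2))
  have hpow : {b : ℕ | b ^ x₁ ∈ A} ∈ W := pow_mem_ultra hW h0 hA x₁
  obtain ⟨x₂, hx₂⟩ := Ultrafilter.nonempty_of_mem
    (Filter.inter_mem (Filter.inter_mem hAW h2) (Filter.inter_mem hlog hpow))
  exact ⟨x₁, x₂, hx₁A, hx₂.1.1, hx₁2, hx₂.1.2, hx₂.2.1, hx₂.2.2⟩
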